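/- Let q be an odd prime and let g be an element of SL₂(ZMod q) whose order divides q + 1. Then g is conjugate to its inverse g⁻¹ in SL₂(ZMod q). -/

import Mathlib

open Matrix Polynomial

lemma quad_rep {q : ℕ} [Fact (Nat.Prime q)] (hq : Odd q)
    (A B C e : ZMod q) (hA : A ≠ 0) (hD : B^2 - 4*A*C ≠ 0) :
    ∃ x y : ZMod q, A*x^2 + B*x*y + C*y^2 = e := by
  have hcard : (Fintype.card (ZMod q)) % 2 = 1 := by
    rw [ZMod.card]; exact Nat.odd_iff.mp hq
  obtain ⟨u, v, huv⟩ := FiniteField.exists_root_sum_quadratic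
    (f := X^2 - Polynomial.C (4*A*e))
    (g := Polynomial.C (-(B^2 - 4*A*C)) * X^2)
    (Polynomial.degree_X_pow_sub_C (by norm_num) _)
    (Polynomial.degree_C_mul_X_pow 2 (neg_ne_zero.mpr hD)) hcard
  simp only [eval_add, eval_sub, eval_pow, eval_X, eval_C, eval_mul, eval_neg] at huv
  have h2 : (2 : ZMod q) ≠ 0 := by
    have hq2 : q ≠ 2 := by rintro rfl; revert hq; decide
    intro h
    have : (q : ℕ) ∣ 2 := by
      have := (ZMod.natCast_eq_zero_iff 2 q).mp (by exact_mod_cast h)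
      exact this
    exact hq2 ((Nat.prime_dvd_prime_iff_eq Fact.out Nat.prime_two).mp this)
  have h2A : 2*A ≠ 0 := mul_ne_zero h2 hA
  set x := (u - B*v) * (2*A)⁻¹ with hxdef
  have hx : 2*A*x + B*v = u := by rw [hxdef]; field_simp; ring
  clear_value x
  refine ⟨x, v, ?_⟩
  have h4A : (4:ZMod q)*A ≠ 0 := by
    intro h; apply h2A
    have : (4:ZMod q) = 2*2 := by norm_num
    rw [this, mul_assoc] at h
    rcases mul_eq_zero.mp h with h' | h'
    · exact absurd h' h2
    · exact h'
  apply mul_left_cancel₀ h4A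
  linear_combination huv + (2*A*x+B*v+u) * hx

lemma pow_one_add {R : Type*} [Ring R] {n : R} (h : n * n = 0) (k : ℕ) :
    (1 + n)^k = 1 + k • n := by
  induction k with
  | zero => simp
  | succ k ih =>
    rw [pow_succ, ih, mul_add, mul_one, add_mul, one_mul, smul_mul_assoc, h, smul_zero,
      add_zero, succ_nsmul]
    abel

theorem conj_inv_of_order_dvd_add_one (q : ℕ) [Fact (Nat.Prime q)] (hq : Odd q)
    (g : Matrix.SpecialLinearGroup (Fin 2) (ZMod q)) (hg : orderOf g ∣ q + 1) :
    IsConj g g⁻¹ := by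
  obtain ⟨a, b, c, d, heta⟩ :
      ∃ a b c d, (g : Matrix (Fin 2) (Fin 2) (ZMod q)) = !![a, b; c, d] :=
    ⟨_, _, _, _, Matrix.eta_fin_two _⟩
  have hdet : a * d - b * c = 1 := by
    have h := g.2
    rw [heta, Matrix.det_fin_two_of] at h
    exact h
  by_cases hsplit : (a + d)^2 - 4 = 0
  · -- a + d = 2 or a + d = -2
    have : (a + d - 2) * (a + d + 2) = 0 := by linear_combination hsplit
    rcases mul_eq_zero.mp this with ht | ht
    · -- trace 2 case : g = 1
      have ht2 : a + d = 2 := by linear_combination ht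
      have hn : ((g : Matrix (Fin 2) (Fin 2) (ZMod q)) - 1) *
          ((g : Matrix (Fin 2) (Fin 2) (ZMod q)) - 1) = 0 := by
        rw [heta]
        ext i j
        fin_cases i <;> fin_cases j <;>
          simp [Matrix.mul_apply, Fin.sum_univ_two, Matrix.one_apply] <;>
          first
          | linear_combination a*ht2 - hdet
          | linear_combination d*ht2 - hdet
          | linear_combination b*ht2
          | linear_combination c*ht2
      have h1 : (1 : Matrix (Fin 2) (Fin 2) (ZMod q)) +
          ((g : Matrix (Fin 2) (Fin 2) (ZMod q)) - 1) = (g : Matrix (Fin 2) (Fin 2) (ZMod q)) := by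
        abel
      have h0 : (q : ℕ) • ((g : Matrix (Fin 2) (Fin 2) (ZMod q)) - 1) = 0 := by
        ext i j
        simp [nsmul_eq_mul, ZMod.natCast_self]
      have hgq : (g : Matrix (Fin 2) (Fin 2) (ZMod q)) ^ q = 1 := by
        have := pow_one_add hn q
        rw [h1, h0, add_zero] at this
        exact this
      have hpow : g ^ q = 1 := by
        apply Subtype.coe_injective
        show ((g ^ q : Matrix.SpecialLinearGroup (Fin 2) (ZMod q)) : Matrix (Fin 2) (Fin 2) (ZMod q))
          = ((1 : Matrix.SpecialLinearGroup (Fin 2) (ZMod q)) : Matrix (Fin 2) (Fin 2) (ZMod q))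
        rw [Matrix.SpecialLinearGroup.coe_pow, Matrix.SpecialLinearGroup.coe_one]
        exact hgq
      have hdvd1 : orderOf g ∣ 1 := by
        have h2 := Nat.dvd_sub hg (orderOf_dvd_of_pow_eq_one hpow)
        simpa using h2
      have : g = 1 := orderOf_eq_one_iff.mp (Nat.dvd_one.mp hdvd1)
      rw [this]
      simp
    · -- trace -2 case : g² = 1 hence g⁻¹ = g
      have ht2 : a + d = -2 := by linear_combination ht
      have hn : ((g : Matrix (Fin 2) (Fin 2) (ZMod q)) + 1) *
          ((g : Matrix (Fin 2) (Fin 2) (ZMod q)) + 1) = 0 := by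
        rw [heta]
        ext i j
        fin_cases i <;> fin_cases j <;>
          simp [Matrix.mul_apply, Fin.sum_univ_two, Matrix.one_apply] <;>
          first
          | linear_combination a*ht2 - hdet
          | linear_combination d*ht2 - hdet
          | linear_combination b*ht2
          | linear_combination c*ht2
      have hn' : (-((g : Matrix (Fin 2) (Fin 2) (ZMod q)) + 1)) *
          (-((g : Matrix (Fin 2) (Fin 2) (ZMod q)) + 1)) = 0 := by
        rw [neg_mul_neg]; exact hn
      have h1 : (1 : Matrix (Fin 2) (Fin 2) (ZMod q)) +
          (-((g : Matrix (Fin 2) (Fin 2) (ZMod q)) + 1)) = -(g : Matrix (Fin 2) (Fin 2) (ZMod q)) := by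
        abel
      have h0 : (q : ℕ) • (-((g : Matrix (Fin 2) (Fin 2) (ZMod q)) + 1)) = 0 := by
        ext i j
        simp [nsmul_eq_mul, ZMod.natCast_self]
      have hgq : (-(g : Matrix (Fin 2) (Fin 2) (ZMod q))) ^ q = 1 := by
        have := pow_one_add hn' q
        rw [h1, h0, add_zero] at this
        exact this
      have hgq' : (g : Matrix (Fin 2) (Fin 2) (ZMod q)) ^ q = -1 := by
        have := hq.neg_pow (g : Matrix (Fin 2) (Fin 2) (ZMod q))
        rw [hgq] at this
        rw [← neg_neg ((g : Matrix (Fin 2) (Fin 2) (ZMod q)) ^ q), ← this]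
      have hpow : g ^ (q * 2) = 1 := by
        apply Subtype.coe_injective
        show ((g ^ (q * 2) : Matrix.SpecialLinearGroup (Fin 2) (ZMod q)) : Matrix (Fin 2) (Fin 2) (ZMod q))
          = ((1 : Matrix.SpecialLinearGroup (Fin 2) (ZMod q)) : Matrix (Fin 2) (Fin 2) (ZMod q))
        rw [Matrix.SpecialLinearGroup.coe_pow, Matrix.SpecialLinearGroup.coe_one]
        rw [pow_mul, hgq']
        simp
      have hdvd2 : orderOf g ∣ 2 := by
        have hA : orderOf g ∣ 2 * (q + 1) := Dvd.dvd.mul_left hg 2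
        have hB : orderOf g ∣ 2 * q := by
          rw [mul_comm]; exact orderOf_dvd_of_pow_eq_one hpow
        have := Nat.dvd_sub hA hB
        have h22 : 2 * (q + 1) - 2 * q = 2 := by omega
        rwa [h22] at this
      have hsq : g * g = 1 := by
        have := orderOf_dvd_iff_pow_eq_one.mp hdvd2
        rwa [pow_two] at this
      rw [show g⁻¹ = g from inv_eq_of_mul_eq_one_right hsq]
  · -- main case: trace ≠ ±2
    have hD : (a - d)^2 + 4*(b*c) ≠ 0 := by
      intro h; apply hsplit; linear_combination h + 4*hdet
    obtain ⟨x, y, z, hlin, hdet2⟩ :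
        ∃ x y z : ZMod q, (a - d)*x + c*y + b*z = 0 ∧ -x^2 - y*z = 1 := by
      by_cases hb0 : b ≠ 0
      · obtain ⟨x, y, hxy⟩ := quad_rep hq (-b) (a - d) c b (neg_ne_zero.mpr hb0)
          (by intro h; apply hD; linear_combination h)
        have hz : b * (-((a - d)*x + c*y) * b⁻¹) = -((a - d)*x + c*y) := by
          field_simp
        refine ⟨x, y, -((a - d)*x + c*y) * b⁻¹, ?_, ?_⟩
        · linear_combination hz
        · refine mul_left_cancel₀ hb0 ?_
          linear_combination hxy - y * hz
      · by_cases hc0 : c ≠ 0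
        · obtain ⟨x, z, hxz⟩ := quad_rep hq (-c) (a - d) b c (neg_ne_zero.mpr hc0)
            (by intro h; apply hD; linear_combination h)
          have hz : c * (-((a - d)*x + b*z) * c⁻¹) = -((a - d)*x + b*z) := by
            field_simp
          refine ⟨x, -((a - d)*x + b*z) * c⁻¹, z, ?_, ?_⟩
          · linear_combination hz
          · refine mul_left_cancel₀ hc0 ?_
            linear_combination hxz - z * hz
        · push_neg at hb0 hc0
          have had : a - d ≠ 0 := by
            intro h; apply hD
            rw [hb0, hc0, h]; ring
          exact ⟨0, 1, -1, by rw [hb0, hc0]; ring, by ring⟩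
    have hSdet : Matrix.det !![x, y; z, -x] = 1 := by
      rw [Matrix.det_fin_two_of]; linear_combination hdet2
    refine isConj_iff.mpr ⟨⟨!![x, y; z, -x], hSdet⟩, ?_⟩
    apply mul_inv_eq_iff_eq_mul.mpr
    apply Subtype.coe_injective
    show ((⟨!![x, y; z, -x], hSdet⟩ * g : Matrix.SpecialLinearGroup (Fin 2) (ZMod q)) :
        Matrix (Fin 2) (Fin 2) (ZMod q))
      = ((g⁻¹ * ⟨!![x, y; z, -x], hSdet⟩ : Matrix.SpecialLinearGroup (Fin 2) (ZMod q)) :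
        Matrix (Fin 2) (Fin 2) (ZMod q))
    erw [Matrix.SpecialLinearGroup.coe_mul, Matrix.SpecialLinearGroup.coe_mul,
      Matrix.SpecialLinearGroup.coe_inv, heta, Matrix.adjugate_fin_two]
    show !![x, y; z, -x] * !![a, b; c, d] = !![d, -b; -c, a] * !![x, y; z, -x]
    ext i j
    fin_cases i <;> fin_cases j <;>
      simp [Matrix.mul_apply, Fin.sum_univ_two] <;>
      (first | ring1 | linear_combination hlin)
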